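/- Let ω₀ ∈ (0,1), s₁, s₂ ∈ (0,2) and θ ∈ ℝ with cos θ ≠ 1, and let p₀, p₁, p₂ be the coefficients of the characteristic polynomial of the MRT-LB scheme. Then 1 + p₀ + p₁ + p₂ = s₂(1 − cos θ)(2 − s₁)(1 − ω₀), and this quantity is strictly positive. -/
import Mathlib


/-- For `ω₀ ∈ (0,1)`, `s₁, s₂ ∈ (0,2)` and `cos θ ≠ 1`, one has
`1 + p₀ + p₁ + p₂ = s₂(1−cos θ)(2−s₁)(1−ω₀) > 0`. -/
theorem routh_condition_four
    (ω₀ s₁ s₂ θ p₀ p₁ p₂ : ℝ)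
    (hω₀ : ω₀ ∈ Set.Ioo (0 : ℝ) 1)
    (hs₁ : s₁ ∈ Set.Ioo (0 : ℝ) 2)
    (hs₂ : s₂ ∈ Set.Ioo (0 : ℝ) 2)
    (hθ : Real.cos θ ≠ 1)
    (hp₀ : p₀ = (s₁ - 1) * (1 - s₂))
    (hp₁ : p₁ = (s₁ - 1) * (s₂ * ω₀ - 1)
      + ((s₁ - 2) * (s₂ - 1) + s₂ * ω₀ * (1 - s₁)) * Real.cos θ)
    (hp₂ : p₂ = s₂ - s₂ * ω₀ - 1 + (s₂ * ω₀ + s₁ - 2) * Real.cos θ) :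
    1 + p₀ + p₁ + p₂ =
      s₂ * (1 - Real.cos θ) * (2 - s₁) * (1 - ω₀) ∧
    0 < 1 + p₀ + p₁ + p₂ := by
  obtain ⟨h1,h2⟩ := hω₀
  obtain ⟨h3,h4⟩ := hs₁
  obtain ⟨h5,h6⟩ := hs₂
  have hc : Real.cos θ < 1 := lt_of_le_of_ne (Real.cos_le_one θ) hθ
  have heq : 1 + p₀ + p₁ + p₂ = s₂ * (1 - Real.cos θ) * (2 - s₁) * (1 - ω₀) := by
    subst hp₀ hp₁ hp₂; ring
  refine ⟨heq, heq ▸ ?_⟩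
  have : 0 < s₂ * (1 - Real.cos θ) * (2 - s₁) * (1 - ω₀) := by
    apply mul_pos (mul_pos (mul_pos h5 (by linarith)) (by linarith)) (by linarith)
  linarith
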